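/- Let p ≥ 3 be prime, a ∈ ℚ_p with |a|_p > 1 and b ∈ ℚ_p with b² = 1 - a. Set x₁ = 1/b and r = |x₁|_p / p (note |x₁|_p = |a|_p^{-1/2}). Then for all x, y in the closed disk D(x₁, r) = {z ∈ ℚ_p : |z - x₁|_p ≤ r}, one has |φ(x) - φ(y)|_p = |a|_p · |x - y|_p, where φ(x) = a·x + 1/x. -/

import Mathlib

theorem stmt5 (p : ℕ) [Fact p.Prime] (hp : 3 ≤ p) (a b : ℚ_[p]) (ha : 1 < ‖a‖)
    (hb : b ^ 2 = 1 - a)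
    (x y : ℚ_[p])
    (hx : ‖x - 1 / b‖ ≤ ‖(1 / b : ℚ_[p])‖ / p)
    (hy : ‖y - 1 / b‖ ≤ ‖(1 / b : ℚ_[p])‖ / p) :
    ‖(a * x + 1 / x) - (a * y + 1 / y)‖ = ‖a‖ * ‖x - y‖ := by
  have hpR : (1 : ℝ) < p := by exact_mod_cast lt_of_lt_of_le (by norm_num) hp
  have hpR0 : (0 : ℝ) < p := lt_trans one_pos hpR
  have ha0 : (0:ℝ) < ‖a‖ := lt_trans one_pos ha
  -- ‖b‖^2 = ‖a‖
  have hna : ‖(1:ℚ_[p]) - a‖ = ‖a‖ := by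
    rw [sub_eq_add_neg, Padic.add_eq_max_of_ne (by rw [norm_neg, norm_one]; exact ne_of_lt ha),
      norm_neg, norm_one, max_eq_right ha.le]
  have hb2 : ‖b‖ ^ 2 = ‖a‖ := by
    rw [← norm_pow, hb, hna]
  have hbpos : (0:ℝ) < ‖b‖ := by
    nlinarith [norm_nonneg b]
  have hb0 : b ≠ 0 := by
    intro h; rw [h, norm_zero] at hbpos; exact lt_irrefl 0 hbpos
  have hb1 : (1:ℝ) < ‖b‖ := by nlinarith
  have hinv : ‖(1/b : ℚ_[p])‖ = ‖b‖⁻¹ := by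
    rw [one_div, norm_inv]
  -- ‖x‖ = ‖1/b‖ and ‖y‖ likewise
  have hxb : ∀ z : ℚ_[p], ‖z - 1/b‖ ≤ ‖(1/b : ℚ_[p])‖ / p → ‖z‖ = ‖b‖⁻¹ := by
    intro z hz
    have hlt : ‖z - 1/b‖ < ‖(1/b : ℚ_[p])‖ := lt_of_le_of_lt hz (by
      rw [div_lt_iff₀ hpR0]
      have : (0:ℝ) < ‖(1/b : ℚ_[p])‖ := by rw [hinv]; positivity
      nlinarith)
    have : ‖z‖ = ‖(1/b : ℚ_[p])‖ := by
      have := Padic.add_eq_max_of_ne (q := z - 1/b) (r := 1/b) (ne_of_lt hlt)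
      rw [sub_add_cancel] at this
      rw [this, max_eq_right hlt.le]
    rwa [hinv] at this
  have hxn : ‖x‖ = ‖b‖⁻¹ := hxb x hx
  have hyn : ‖y‖ = ‖b‖⁻¹ := hxb y hy
  have hx0 : x ≠ 0 := by
    intro h; rw [h, norm_zero] at hxn
    exact absurd hxn.symm (ne_of_gt (by positivity))
  have hy0 : y ≠ 0 := by
    intro h; rw [h, norm_zero] at hyn
    exact absurd hyn.symm (ne_of_gt (by positivity))
  -- ‖1/z - b‖ ≤ ‖b‖/p
  have hinvz : ∀ z : ℚ_[p], z ≠ 0 → ‖z‖ = ‖b‖⁻¹ → ‖z - 1/b‖ ≤ ‖(1/b : ℚ_[p])‖ / p →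
      ‖1/z - b‖ ≤ ‖b‖ / p := by
    intro z hz0 hzn hz
    have : 1/z - b = -(b * (z - 1/b) / z) := by field_simp; ring
    rw [this, norm_neg, norm_div, norm_mul, hzn]
    rw [hinv] at hz
    calc ‖b‖ * ‖z - 1/b‖ / ‖b‖⁻¹ ≤ ‖b‖ * (‖b‖⁻¹ / p) / ‖b‖⁻¹ := by
          apply div_le_div_of_nonneg_right ?_ (by positivity)
          exact mul_le_mul_of_nonneg_left hz (norm_nonneg b)
      _ = ‖b‖ / p := by field_simp
  have hix : ‖1/x - b‖ ≤ ‖b‖ / p := hinvz x hx0 hxn hx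
  have hiy : ‖1/y - b‖ ≤ ‖b‖ / p := hinvz y hy0 hyn hy
  -- ‖1/(x*y) - b^2‖ ≤ ‖a‖/p
  have hxy : ‖1/(x*y) - b^2‖ ≤ ‖a‖ / p := by
    have hid : 1/(x*y) - b^2 = (1/x) * (1/y - b) + b * (1/x - b) := by
      field_simp; ring
    rw [hid]
    refine le_trans (Padic.nonarchimedean _ _) (max_le ?_ ?_)
    · rw [norm_mul, one_div, norm_inv, hxn, inv_inv]
      calc ‖b‖ * ‖1/y - b‖ ≤ ‖b‖ * (‖b‖/p) := mul_le_mul_of_nonneg_left hiy (norm_nonneg b)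
        _ = ‖a‖ / p := by rw [← hb2]; ring
    · rw [norm_mul]
      calc ‖b‖ * ‖1/x - b‖ ≤ ‖b‖ * (‖b‖/p) := mul_le_mul_of_nonneg_left hix (norm_nonneg b)
        _ = ‖a‖ / p := by rw [← hb2]; ring
  -- ‖2a - 1‖ = ‖a‖
  have h2 : ‖(2 : ℚ_[p])‖ = 1 := by
    have hle : ‖((2:ℤ) : ℚ_[p])‖ ≤ 1 := Padic.norm_int_le_one 2
    have : ¬ ‖((2:ℤ) : ℚ_[p])‖ < 1 := by
      rw [Padic.norm_intCast_lt_one_iff]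
      intro hdvd
      have := Int.le_of_dvd (by norm_num) hdvd
      omega
    push_cast at hle this
    linarith [lt_or_eq_of_le hle]
  have h2a : ‖2*a - 1‖ = ‖a‖ := by
    have h2an : ‖2*a‖ = ‖a‖ := by rw [norm_mul, h2, one_mul]
    rw [sub_eq_add_neg, Padic.add_eq_max_of_ne
      (by rw [h2an, norm_neg, norm_one]; exact (ne_of_lt ha).symm),
      h2an, norm_neg, norm_one, max_eq_left ha.le]
  -- ‖a - 1/(x*y)‖ = ‖a‖
  have hkey : ‖a - 1/(x*y)‖ = ‖a‖ := by
    have hid : a - 1/(x*y) = (2*a - 1) + (b^2 - 1/(x*y)) := by rw [hb]; ring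
    have hlt : ‖b^2 - 1/(x*y)‖ < ‖2*a - 1‖ := by
      rw [h2a, ← norm_neg, neg_sub]
      refine lt_of_le_of_lt hxy ?_
      rw [div_lt_iff₀ hpR0]; nlinarith
    rw [hid, Padic.add_eq_max_of_ne (by rw [h2a]; exact (ne_of_lt (by rwa [h2a] at hlt)).symm),
      max_eq_left (le_of_lt hlt), h2a]
  have hfact : (a * x + 1 / x) - (a * y + 1 / y) = (a - 1/(x*y)) * (x - y) := by
    field_simp; ring
  rw [hfact, norm_mul, hkey]
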